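/- Let Σ ≻ 0 and Ω ≻ 0 be d×d positive definite matrices, A invertible, ε > 0, and suppose F, G ≻ 0 satisfy F = εΣ⁻¹ + AᵀG⁻¹A and G = εΩ⁻¹ + AF⁻¹Aᵀ. Define C_F := ΩAF⁻¹Aᵀ. Then C_F satisfies the quadratic matrix equation C_F² + εC_F = ΩAΣAᵀ, all eigenvalues of C_F are positive, and C_F = Ω^{1/2}(Ω^{1/2}AΣAᵀΩ^{1/2} + (ε²/4)I)^{1/2}Ω^{−1/2} − (ε/2)I. -/

import Mathlib

open Matrix

section

open scoped ComplexOrder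

/-- The square root of a positive semidefinite matrix, as defined in Mathlib (December 2024)
under the name `Matrix.PosSemidef.sqrt`, which has since been removed. -/
noncomputable def Matrix.PosSemidef.sqrt {n : Type*} [Fintype n] [DecidableEq n] {𝕜 : Type*}
    [RCLike 𝕜] {A : Matrix n n 𝕜} (hA : A.PosSemidef) : Matrix n n 𝕜 :=
  (hA.1.eigenvectorUnitary : Matrix n n 𝕜) * diagonal ((↑) ∘ (√·) ∘ hA.1.eigenvalues) *
    (star hA.1.eigenvectorUnitary : Matrix n n 𝕜)

end

open scoped MatrixOrder in
lemma aux_sqrt_eq {d : ℕ} {W : Matrix (Fin d) (Fin d) ℝ} (hW : W.PosSemidef) :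
    hW.sqrt = CFC.sqrt W := by
  rw [CFC.sqrt_eq_cfc, cfc_nnreal_eq_real _ W hW.nonneg, hW.1.cfc_eq]
  simp [Matrix.PosSemidef.sqrt, IsHermitian.cfc, Function.comp_def, max_eq_left, hW.eigenvalues_nonneg]

open scoped MatrixOrder in
lemma aux_sqrt_mul_self {d : ℕ} {W : Matrix (Fin d) (Fin d) ℝ} (hW : W.PosSemidef) :
    hW.sqrt * hW.sqrt = W := by
  rw [aux_sqrt_eq]; exact CFC.sqrt_mul_sqrt_self W hW.nonneg

open scoped MatrixOrder in
lemma aux_sqrt_posSemidef {d : ℕ} {W : Matrix (Fin d) (Fin d) ℝ} (hW : W.PosSemidef) :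
    hW.sqrt.PosSemidef := by
  rw [aux_sqrt_eq]; exact (CFC.sqrt_nonneg W).posSemidef

open scoped MatrixOrder in
lemma aux_eq_of_sq_eq_sq {d : ℕ} {A B : Matrix (Fin d) (Fin d) ℝ} (hA : A.PosSemidef)
    (hB : B.PosSemidef) (h : A ^ 2 = B ^ 2) : A = B := by
  rw [← CFC.sqrt_sq A hA.nonneg, h, CFC.sqrt_sq B hB.nonneg]

lemma aux_posdef_conj {d : ℕ} {M B : Matrix (Fin d) (Fin d) ℝ}
    (hM : M.PosDef) (hB : IsUnit B.det) : (B * M * Bᵀ).PosDef := by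
  have hBt : IsUnit (Bᵀ).det := by simpa [det_transpose] using hB
  refine posDef_iff_dotProduct_mulVec.mpr ⟨?_, ?_⟩
  · have := isHermitian_mul_mul_conjTranspose B hM.isHermitian
    simpa [conjTranspose_eq_transpose_of_trivial] using this
  · intro x hx
    have hy : Bᵀ *ᵥ x ≠ 0 := by
      intro hy0
      apply hx
      have := congrArg (fun v => (Bᵀ)⁻¹ *ᵥ v) hy0
      simpa [mulVec_mulVec, nonsing_inv_mul _ hBt, one_mulVec] using this
    have key : star x ⬝ᵥ ((B * M * Bᵀ) *ᵥ x) = star (Bᵀ *ᵥ x) ⬝ᵥ (M *ᵥ (Bᵀ *ᵥ x)) := by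
      rw [← mulVec_mulVec, ← mulVec_mulVec, dotProduct_mulVec, ← mulVec_transpose]
      simp [star_trivial]
    rw [key]
    exact hM.dotProduct_mulVec_pos hy

/-- Let `Σ, Ω ≻ 0`, `A` invertible, `ε > 0`, and `F, G ≻ 0` solving the limiting Schrödinger
system `F = εΣ⁻¹ + AᵀG⁻¹A`, `G = εΩ⁻¹ + AF⁻¹Aᵀ`. Then `C_F := ΩAF⁻¹Aᵀ` satisfies
`C_F² + εC_F = ΩAΣAᵀ`, all (real) eigenvalues of `C_F` are positive, and
`C_F = Ω^{1/2}(Ω^{1/2}AΣAᵀΩ^{1/2} + (ε²/4)I)^{1/2}Ω^{−1/2} − (ε/2)I` (the middle square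
root being the unique positive semidefinite square root). -/
theorem stmt_17 (d : ℕ) (S W A F G : Matrix (Fin d) (Fin d) ℝ) (ε : ℝ) (hε : 0 < ε)
    (hS : S.PosDef) (hW : W.PosDef) (hA : IsUnit A.det)
    (hF : F.PosDef) (hG : G.PosDef)
    (hFeq : F = ε • S⁻¹ + Aᵀ * G⁻¹ * A) (hGeq : G = ε • W⁻¹ + A * F⁻¹ * Aᵀ) :
    (W * A * F⁻¹ * Aᵀ) * (W * A * F⁻¹ * Aᵀ) + ε • (W * A * F⁻¹ * Aᵀ) =
      W * A * S * Aᵀ ∧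
    (∀ c : ℝ, c ∈ spectrum ℝ (W * A * F⁻¹ * Aᵀ) → 0 < c) ∧
    (∀ Y : Matrix (Fin d) (Fin d) ℝ, Y.PosSemidef →
      Y * Y = Matrix.PosSemidef.sqrt hW.posSemidef * (A * S * Aᵀ) * Matrix.PosSemidef.sqrt hW.posSemidef +
        (ε ^ 2 / 4) • (1 : Matrix (Fin d) (Fin d) ℝ) →
      W * A * F⁻¹ * Aᵀ =
        Matrix.PosSemidef.sqrt hW.posSemidef * Y * (Matrix.PosSemidef.sqrt hW.posSemidef)⁻¹ -
          (ε / 2) • (1 : Matrix (Fin d) (Fin d) ℝ)) := by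
  set R := Matrix.PosSemidef.sqrt hW.posSemidef with hRdef
  set X := A * F⁻¹ * Aᵀ with hXdef
  set M := A * S * Aᵀ with hMdef
  have hRR : R * R = W := aux_sqrt_mul_self hW.posSemidef
  have hRt : Rᵀ = R := by
    have := (aux_sqrt_posSemidef hW.posSemidef).1
    rwa [IsHermitian, conjTranspose_eq_transpose_of_trivial] at this
  have hWd : IsUnit W.det := isUnit_iff_ne_zero.mpr hW.det_pos.ne'
  have hFd : IsUnit F.det := isUnit_iff_ne_zero.mpr hF.det_pos.ne'
  have hGd : IsUnit G.det := isUnit_iff_ne_zero.mpr hG.det_pos.ne'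
  have hAt : IsUnit (Aᵀ).det := by simpa [det_transpose] using hA
  have hRd : IsUnit R.det := by
    have h2 : R.det * R.det = W.det := by rw [← det_mul, hRR]
    refine isUnit_iff_ne_zero.mpr fun h0 => ?_
    rw [h0, mul_zero] at h2
    exact hW.det_pos.ne' h2.symm
  have hXpd : X.PosDef := aux_posdef_conj hF.inv hA
  have hMpd : M.PosDef := aux_posdef_conj hS hA
  have hXd : IsUnit X.det := isUnit_iff_ne_zero.mpr hXpd.det_pos.ne'
  have hMd : IsUnit M.det := isUnit_iff_ne_zero.mpr hMpd.det_pos.ne'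
  -- cancellation helpers
  have cWX : ∀ B, W⁻¹ * (W * B) = B := fun B => nonsing_inv_mul_cancel_left _ B hWd
  have cXX : X⁻¹ * X = 1 := nonsing_inv_mul _ hXd
  have cMM : ∀ B, M * (M⁻¹ * B) = B := fun B => mul_nonsing_inv_cancel_left _ B hMd
  have cGG : G⁻¹ * G = 1 := nonsing_inv_mul _ hGd
  have cAA : A * A⁻¹ = 1 := mul_nonsing_inv _ hA
  have cAt : ∀ B, (Aᵀ)⁻¹ * (Aᵀ * B) = B := fun B => nonsing_inv_mul_cancel_left _ B hAt
  have cRR : ∀ B, R * (R * B) = W * B := fun B => by rw [← Matrix.mul_assoc, hRR]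
  have cRRi : R * R⁻¹ = 1 := mul_nonsing_inv _ hRd
  -- inverse of X
  have hXinv : X⁻¹ = ε • M⁻¹ + G⁻¹ := by
    have hMinv : M⁻¹ = (Aᵀ)⁻¹ * (S⁻¹ * A⁻¹) := by
      rw [hMdef, Matrix.mul_inv_rev, Matrix.mul_inv_rev]
    rw [hXdef, Matrix.mul_inv_rev, Matrix.mul_inv_rev,
      nonsing_inv_nonsing_inv _ hFd, hFeq, hMinv]
    simp only [Matrix.add_mul, Matrix.mul_add, Matrix.smul_mul, Matrix.mul_smul,
      Matrix.mul_assoc, cAA, Matrix.mul_one, cAt]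
  -- key identity
  have e5 : M * (X⁻¹ * G) = ε • G + M := by
    rw [hXinv]
    simp only [Matrix.add_mul, Matrix.mul_add, Matrix.smul_mul, Matrix.mul_smul,
      Matrix.mul_assoc, cMM, cGG, Matrix.mul_one]
  rw [hGeq] at e5
  simp only [Matrix.mul_add, Matrix.add_mul, Matrix.mul_smul, Matrix.smul_mul,
    Matrix.mul_assoc, cXX, Matrix.mul_one] at e5
  have e7 : M * (X⁻¹ * W⁻¹) = ε • W⁻¹ + X := by
    have h := add_right_cancel e5
    exact smul_right_injective _ hε.ne' h
  have e8 : M = ε • X + X * (W * X) := by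
    have h := congrArg (fun Z => Z * (W * X)) e7
    simpa only [Matrix.add_mul, Matrix.smul_mul, Matrix.mul_assoc, cWX, cXX,
      Matrix.mul_one] using h
  have hC : W * A * F⁻¹ * Aᵀ = W * X := by
    rw [hXdef]; simp only [Matrix.mul_assoc]
  have hCM : W * A * S * Aᵀ = W * M := by
    rw [hMdef]; simp only [Matrix.mul_assoc]
  have hRXR : (R * X * R).PosDef := by
    have := aux_posdef_conj hXpd hRd
    rwa [hRt] at this
  refine ⟨?_, ?_, ?_⟩
  · rw [hC, hCM, e8]
    simp only [Matrix.mul_add, Matrix.mul_smul, Matrix.mul_assoc]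
    exact add_comm _ _
  · have hconj : W * A * F⁻¹ * Aᵀ = R * (R * X * R) * R⁻¹ := by
      rw [hC]
      simp only [Matrix.mul_assoc, cRRi, Matrix.mul_one]
      rw [cRR]
    intro c hc
    rw [hconj] at hc
    have hu : IsUnit R := (isUnit_iff_isUnit_det R).mpr hRd
    have hs : spectrum ℝ (R * (R * X * R) * R⁻¹) = spectrum ℝ (R * X * R) := by
      have := spectrum.units_conjugate (R := ℝ) (a := R * X * R) (u := hu.unit)
      rwa [coe_units_inv, IsUnit.unit_spec] at this
    rw [hs, hRXR.isHermitian.spectrum_real_eq_range_eigenvalues] at hc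
    obtain ⟨i, hi⟩ := hc
    exact hi ▸ hRXR.eigenvalues_pos i
  · intro Y hY hY2
    have hhalf : ((ε / 2) • (1 : Matrix (Fin d) (Fin d) ℝ)).PosSemidef := by
      rw [smul_one_eq_diagonal]
      exact PosSemidef.diagonal (fun i => (half_pos hε).le)
    have hZpsd : (R * X * R + (ε / 2) • (1 : Matrix (Fin d) (Fin d) ℝ)).PosSemidef :=
      (hRXR.add_posSemidef hhalf).posSemidef
    have hZ2 : (R * X * R + (ε / 2) • (1 : Matrix (Fin d) (Fin d) ℝ)) *
        (R * X * R + (ε / 2) • (1 : Matrix (Fin d) (Fin d) ℝ)) = Y * Y := by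
      rw [hY2, e8]
      simp only [Matrix.add_mul, Matrix.mul_add, Matrix.smul_mul, Matrix.mul_smul,
        Matrix.mul_assoc, cRR, Matrix.mul_one, Matrix.one_mul, smul_smul]
      module
    have hZY : (R * X * R + (ε / 2) • (1 : Matrix (Fin d) (Fin d) ℝ)) = Y :=
      aux_eq_of_sq_eq_sq hZpsd hY (by rw [pow_two, pow_two, hZ2])
    rw [← hZY, hC]
    simp only [Matrix.mul_add, Matrix.add_mul, Matrix.mul_smul, Matrix.smul_mul,
      Matrix.mul_assoc, cRRi, Matrix.mul_one, Matrix.one_mul, cRR, add_sub_cancel_right]
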